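/- (Policy improvement on the augmented MDP.) Let π^core be a policy core and π a mixed policy built from π^core and some policy inertia controller μ : S × A → [0,1]. If for every state s and previous action a' the one-step expected value satisfies E_{a ~ π(·|s,a')}[Q^{π^core}(s,a)] ≥ V^{π^core}(s), then the value of the mixed policy on the augmented MDP dominates the value of the policy core: V^π(s,a') ≥ V^{π^core}(s) for every state s and previous action a'. -/

import Mathlib

open scoped BigOperators

noncomputable section

/-- A probability distribution on a finite type, given as a nonnegative
function summing to one. -/
def IsDist {X : Type*} [Fintype X] (d : X → ℝ) : Prop :=
  (∀ x, 0 ≤ d x) ∧ ∑ x, d x = 1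

/-- A transition kernel: for each state-action pair, a distribution on states. -/
def IsKernel {S A : Type*} [Fintype S] (P : S → A → S → ℝ) : Prop :=
  ∀ s a, IsDist (P s a)

/-- A (stationary) stochastic policy: for each state, a distribution on actions. -/
def IsPolicy {S A : Type*} [Fintype A] (π : S → A → ℝ) : Prop :=
  ∀ s, IsDist (π s)

/-- The state-action distribution at time `t` of the trajectory generated by
policy `π` in the MDP with transition kernel `P`, started from the initial
state-action distribution `d0`. -/
def saDist {S A : Type*} [Fintype S] [Fintype A]
    (P : S → A → S → ℝ) (π : S → A → ℝ) (d0 : S × A → ℝ) : ℕ → S × A → ℝ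
  | 0 => d0
  | t + 1 => fun q => ∑ p : S × A, saDist P π d0 t p * P p.1 p.2 q.1 * π q.1 q.2

/-- The state-action value function `Q^π(s,a)`:
expected discounted return starting at state `s`, taking action `a` first and
following `π` afterwards. -/
def Qval {S A : Type*} [Fintype S] [Fintype A] [DecidableEq S] [DecidableEq A]
    (P : S → A → S → ℝ) (r : S → A → ℝ) (γ : ℝ) (π : S → A → ℝ) (s : S) (a : A) : ℝ :=
  ∑' t : ℕ, γ ^ t *
    ∑ q : S × A, saDist P π (fun p => if p = (s, a) then 1 else 0) t q * r q.1 q.2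

/-- The state value function `V^π(s)`. -/
def Vval {S A : Type*} [Fintype S] [Fintype A] [DecidableEq S] [DecidableEq A]
    (P : S → A → S → ℝ) (r : S → A → ℝ) (γ : ℝ) (π : S → A → ℝ) (s : S) : ℝ :=
  ∑ a : A, π s a * Qval P r γ π s a

/-- The advantage function `A^π(s,a) = Q^π(s,a) − V^π(s)`. -/
def Adv {S A : Type*} [Fintype S] [Fintype A] [DecidableEq S] [DecidableEq A]
    (P : S → A → S → ℝ) (r : S → A → ℝ) (γ : ℝ) (π : S → A → ℝ) (s : S) (a : A) : ℝ :=
  Qval P r γ π s a - Vval P r γ π s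

/-- Transition kernel of the augmented MDP whose states are pairs
`(state, previously executed action)` : `((s,a'),a) ↦ (s',a)` with `s' ~ P(·|s,a)`. -/
def augP {S A : Type*} [DecidableEq A] (P : S → A → S → ℝ) :
    S × A → A → S × A → ℝ :=
  fun x a y => if y.2 = a then P x.1 a y.1 else 0

/-- Reward of the augmented MDP: `r((s,a'),a) = r(s,a)`. -/
def augR {S A : Type*} (r : S → A → ℝ) : S × A → A → ℝ :=
  fun x a => r x.1 a

/-- A policy on the base MDP viewed as a policy on the augmented MDP. -/
def liftPolicy {S A : Type*} (π : S → A → ℝ) : S × A → A → ℝ :=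
  fun x a => π x.1 a

/-- The mixed (PIC-augmented) policy
`π(·|s,a') = μ(s,a')·δ_{a'} + (1−μ(s,a'))·π^core(·|s)`,
a stationary policy on the augmented MDP. -/
def mixed {S A : Type*} [DecidableEq A] (μ : S → A → ℝ) (πc : S → A → ℝ) :
    S × A → A → ℝ :=
  fun x a => μ x.1 x.2 * (if a = x.2 then 1 else 0) + (1 - μ x.1 x.2) * πc x.1 a


section Aux

variable {S A : Type*} [Fintype S] [Fintype A] [DecidableEq S] [DecidableEq A]
variable (P : S → A → S → ℝ) (π : S → A → ℝ)

lemma saDist_step (d0 : S × A → ℝ) (t : ℕ) (q : S × A) :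
    saDist P π d0 (t + 1) q =
      ∑ p : S × A, saDist P π d0 t p * P p.1 p.2 q.1 * π q.1 q.2 := rfl

/-- linearity of saDist in the initial distribution -/
lemma saDist_linear (t : ℕ) (d0 : S × A → ℝ) (q : S × A) :
    saDist P π d0 t q =
      ∑ p : S × A, d0 p * saDist P π (fun x => if x = p then 1 else 0) t q := by
  induction t generalizing q with
  | zero =>
      simp [saDist]
  | succ t ih =>
      simp only [saDist_step, ih, Finset.sum_mul, Finset.mul_sum]
      rw [Finset.sum_comm]
      exact Finset.sum_congr rfl fun x _ => Finset.sum_congr rfl fun p _ => by ring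

/-- shift: stepping the initial distribution -/
lemma saDist_succ (t : ℕ) (d0 : S × A → ℝ) (q : S × A) :
    saDist P π d0 (t + 1) q =
      saDist P π (fun q' => ∑ p : S × A, d0 p * P p.1 p.2 q'.1 * π q'.1 q'.2) t q := by
  induction t generalizing q with
  | zero => simp [saDist]
  | succ t ih =>
      rw [saDist_step _ _ _ (t + 1)]
      simp only [ih]
      rw [saDist_step]

/-- saDist preserves distributions -/
lemma saDist_isDist (hP : IsKernel P) (hπ : IsPolicy π) (d0 : S × A → ℝ)
    (hd0 : IsDist d0) (t : ℕ) : IsDist (saDist P π d0 t) := by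
  induction t with
  | zero => exact hd0
  | succ t ih =>
      constructor
      · intro q
        exact Finset.sum_nonneg fun p _ => by
          have := (hP p.1 p.2).1 q.1
          have := (hπ q.1).1 q.2
          have := ih.1 p
          positivity
      · simp only [saDist]
        rw [Finset.sum_comm]
        have : ∀ p : S × A,
            ∑ q : S × A, saDist P π d0 t p * P p.1 p.2 q.1 * π q.1 q.2
              = saDist P π d0 t p := by
          intro p
          rw [Fintype.sum_prod_type]
          have : ∀ s' : S, ∑ a : A, saDist P π d0 t p * P p.1 p.2 s' * π s' a
              = saDist P π d0 t p * P p.1 p.2 s' := by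
            intro s'
            rw [← Finset.mul_sum, (hπ s').2, mul_one]
          simp only [this]
          rw [← Finset.mul_sum, (hP p.1 p.2).2, mul_one]
        simp only [this]
        exact ih.2

lemma delta_isDist (p0 : S × A) : IsDist (fun x => if x = p0 then (1:ℝ) else 0) := by
  constructor
  · intro x; positivity
  · simp

lemma dist_le_one {X : Type*} [Fintype X] {d : X → ℝ} (hd : IsDist d) (x : X) : d x ≤ 1 := by
  rw [← hd.2]
  exact Finset.single_le_sum (fun i _ => hd.1 i) (Finset.mem_univ x)

lemma summable_series (r : S → A → ℝ) {γ : ℝ} (hγ0 : 0 ≤ γ) (hγ1 : γ < 1)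
    (hP : IsKernel P) (hπ : IsPolicy π) (d0 : S × A → ℝ) (hd0 : IsDist d0) :
    Summable (fun t : ℕ => γ ^ t * ∑ q : S × A, saDist P π d0 t q * r q.1 q.2) := by
  have hC : ∀ t : ℕ, ‖γ ^ t * ∑ q : S × A, saDist P π d0 t q * r q.1 q.2‖
      ≤ γ ^ t * ∑ q : S × A, |r q.1 q.2| := by
    intro t
    have hd := saDist_isDist P π hP hπ d0 hd0 t
    rw [norm_mul, norm_pow, Real.norm_eq_abs, Real.norm_eq_abs, abs_of_nonneg hγ0]
    gcongr
    refine (Finset.abs_sum_le_sum_abs _ _).trans ?_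
    refine Finset.sum_le_sum fun q _ => ?_
    rw [abs_mul, abs_of_nonneg (hd.1 q)]
    have h1 := dist_le_one hd q
    have h2 := abs_nonneg (r q.1 q.2)
    nlinarith
  exact Summable.of_norm_bounded
    ((summable_geometric_of_lt_one hγ0 hγ1).mul_right _) hC

lemma qval_bellman (r : S → A → ℝ) {γ : ℝ} (hγ0 : 0 ≤ γ) (hγ1 : γ < 1)
    (hP : IsKernel P) (hπ : IsPolicy π) (s : S) (a : A) :
    Qval P r γ π s a = r s a + γ * ∑ s' : S, P s a s' * Vval P r γ π s' := by
  have hsum : ∀ p0 : S × A, Summable (fun t : ℕ => γ ^ t *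
      ∑ q : S × A, saDist P π (fun x => if x = p0 then (1:ℝ) else 0) t q * r q.1 q.2) :=
    fun p0 => summable_series P π r hγ0 hγ1 hP hπ _ (delta_isDist p0)
  rw [Qval, Summable.tsum_eq_zero_add (hsum (s, a))]
  have h0 : γ ^ 0 * ∑ q : S × A,
      saDist P π (fun p => if p = (s, a) then (1:ℝ) else 0) 0 q * r q.1 q.2 = r s a := by
    simp [saDist, ite_mul]
  rw [h0]
  have hkey : ∀ t : ℕ, γ ^ (t + 1) * ∑ q : S × A,
        saDist P π (fun p => if p = (s, a) then (1:ℝ) else 0) (t+1) q * r q.1 q.2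
      = ∑ p : S × A, (P s a p.1 * π p.1 p.2) * (γ * (γ ^ t *
          ∑ q : S × A, saDist P π (fun x => if x = p then (1:ℝ) else 0) t q * r q.1 q.2)) := by
    intro t
    have hstep : (fun q' : S × A => ∑ p : S × A,
        (if p = (s, a) then (1:ℝ) else 0) * P p.1 p.2 q'.1 * π q'.1 q'.2)
        = fun q' : S × A => P s a q'.1 * π q'.1 q'.2 := by
      funext q'
      simp [ite_mul]
    have : ∀ q : S × A,
        saDist P π (fun p => if p = (s, a) then (1:ℝ) else 0) (t+1) q
        = ∑ p : S × A, (P s a p.1 * π p.1 p.2) *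
            saDist P π (fun x => if x = p then (1:ℝ) else 0) t q := by
      intro q
      rw [saDist_succ, hstep, saDist_linear]
    simp only [this, Finset.sum_mul, Finset.mul_sum]
    rw [Finset.sum_comm]
    exact Finset.sum_congr rfl fun p _ => Finset.sum_congr rfl fun q _ => by ring
  simp only [hkey]
  rw [Summable.tsum_finsetSum (fun p _ => ((hsum p).mul_left γ).mul_left _)]
  congr 1
  have : ∀ p : S × A, ∑' t : ℕ, (P s a p.1 * π p.1 p.2) * (γ * (γ ^ t *
      ∑ q : S × A, saDist P π (fun x => if x = p then (1:ℝ) else 0) t q * r q.1 q.2))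
      = (P s a p.1 * π p.1 p.2) * (γ * Qval P r γ π p.1 p.2) := by
    intro p
    rw [tsum_mul_left, tsum_mul_left]
    rfl
  simp only [this]
  rw [Fintype.sum_prod_type, Finset.mul_sum]
  refine Finset.sum_congr rfl fun s' _ => ?_
  rw [Vval, Finset.mul_sum, Finset.mul_sum]
  refine Finset.sum_congr rfl fun a' _ => ?_
  ring

lemma vval_bellman (r : S → A → ℝ) {γ : ℝ} (hγ0 : 0 ≤ γ) (hγ1 : γ < 1)
    (hP : IsKernel P) (hπ : IsPolicy π) (s : S) :
    Vval P r γ π s = ∑ a : A, π s a *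
      (r s a + γ * ∑ s' : S, P s a s' * Vval P r γ π s') := by
  rw [Vval]
  exact Finset.sum_congr rfl fun a _ => by
    rw [qval_bellman P π r hγ0 hγ1 hP hπ]

end Aux

/-- **Lemma (policy improvement on the augmented MDP).**
Let `πc` be a policy core and `π` the mixed policy built from `πc` and a
policy inertia controller `μ : S × A → [0,1]`. If for every state `s` and
previous action `a'` the one-step expected value satisfies
`E_{a ~ π(·|s,a')}[Q^{πc}(s,a)] ≥ V^{πc}(s)`, then the value of the mixed
policy on the augmented MDP dominates the value of the policy core:
`V^π(s,a') ≥ V^{πc}(s)` for every state `s` and previous action `a'`. -/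
theorem augmented_policy_improvement
    {S A : Type*} [Fintype S] [Fintype A] [Nonempty S] [Nonempty A]
    [DecidableEq S] [DecidableEq A]
    (P : S → A → S → ℝ) (hP : IsKernel P)
    (r : S → A → ℝ) (γ : ℝ) (hγ0 : 0 ≤ γ) (hγ1 : γ < 1)
    (πc : S → A → ℝ) (hπc : IsPolicy πc)
    (μ : S → A → ℝ) (hμ01 : ∀ s a, μ s a ∈ Set.Icc (0 : ℝ) 1)
    (hstep : ∀ (s : S) (a' : A),
      Vval P r γ πc s ≤ ∑ a : A, mixed μ πc (s, a') a * Qval P r γ πc s a) :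
    ∀ (s : S) (a' : A),
      Vval P r γ πc s ≤ Vval (augP P) (augR r) γ (mixed μ πc) (s, a') := by
  set π : S × A → A → ℝ := mixed μ πc with hπdef
  have hπ : IsPolicy π := by
    intro x
    constructor
    · intro a
      have h1 := (hμ01 x.1 x.2).1
      have h2 := (hμ01 x.1 x.2).2
      have h3 := (hπc x.1).1 a
      have : (0:ℝ) ≤ (if a = x.2 then (1:ℝ) else 0) := by positivity
      simp only [hπdef, mixed]
      nlinarith
    · simp only [hπdef, mixed]
      rw [Finset.sum_add_distrib, ← Finset.mul_sum, ← Finset.mul_sum,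
        Finset.sum_ite_eq' Finset.univ x.2 (fun _ => (1:ℝ)), (hπc x.1).2]
      simp
  have hPaug : IsKernel (augP P) := by
    intro x a
    constructor
    · intro y
      simp only [augP]
      split
      · exact (hP x.1 a).1 y.1
      · exact le_refl 0
    · simp only [augP]
      rw [Fintype.sum_prod_type]
      have : ∀ s' : S, ∑ a'' : A, (if a'' = a then P x.1 a s' else 0) = P x.1 a s' := by
        intro s'
        rw [Finset.sum_ite_eq' Finset.univ a (fun _ => P x.1 a s')]
        simp
      simp only [this]
      exact (hP x.1 a).2
  have haug : ∀ (x : S × A) (a : A) (g : S × A → ℝ),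
      ∑ y : S × A, augP P x a y * g y = ∑ s' : S, P x.1 a s' * g (s', a) := by
    intro x a g
    rw [Fintype.sum_prod_type]
    refine Finset.sum_congr rfl fun s' _ => ?_
    have : ∀ a'' : A, augP P x a (s', a'') * g (s', a'')
        = if a'' = a then P x.1 a s' * g (s', a'') else 0 := by
      intro a''
      simp only [augP, ite_mul, zero_mul]
    simp only [this]
    rw [Finset.sum_ite_eq' Finset.univ a (fun a'' => P x.1 a s' * g (s', a''))]
    simp
  set Vb : S × A → ℝ := Vval (augP P) (augR r) γ π with hVbdef
  set W : S × A → ℝ := fun x => Vval P r γ πc x.1 with hWdef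
  have hVB : ∀ x : S × A, Vb x = ∑ a : A, π x a *
      (r x.1 a + γ * ∑ s' : S, P x.1 a s' * Vb (s', a)) := by
    intro x
    rw [hVbdef, vval_bellman (augP P) π (augR r) hγ0 hγ1 hPaug hπ x]
    refine Finset.sum_congr rfl fun a _ => ?_
    rw [haug x a]
    rfl
  have hW : ∀ x : S × A, W x ≤ ∑ a : A, π x a *
      (r x.1 a + γ * ∑ s' : S, P x.1 a s' * W (s', a)) := by
    intro x
    have := hstep x.1 x.2
    calc W x ≤ ∑ a : A, mixed μ πc (x.1, x.2) a * Qval P r γ πc x.1 a := this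
      _ = ∑ a : A, π x a * (r x.1 a + γ * ∑ s' : S, P x.1 a s' * W (s', a)) := by
          refine Finset.sum_congr rfl fun a _ => ?_
          rw [qval_bellman P πc r hγ0 hγ1 hP hπc x.1 a]
  obtain ⟨x0, _, hx0⟩ := Finset.exists_min_image Finset.univ (fun x => Vb x - W x)
    ⟨Classical.arbitrary (S × A), Finset.mem_univ _⟩
  set m : ℝ := Vb x0 - W x0 with hmdef
  have hmle : ∀ x : S × A, m ≤ Vb x - W x := fun x => hx0 x (Finset.mem_univ x)
  have hkey : γ * m ≤ m := by
    have h1 : γ * m = ∑ a : A, π x0 a * (γ * m) := by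
      rw [← Finset.sum_mul, (hπ x0).2, one_mul]
    have h2 : ∀ a : A, π x0 a * (γ * m) ≤ π x0 a *
        (γ * ∑ s' : S, P x0.1 a s' * (Vb (s', a) - W (s', a))) := by
      intro a
      refine mul_le_mul_of_nonneg_left ?_ ((hπ x0).1 a)
      refine mul_le_mul_of_nonneg_left ?_ hγ0
      calc m = ∑ s' : S, P x0.1 a s' * m := by
            rw [← Finset.sum_mul, (hP x0.1 a).2, one_mul]
        _ ≤ ∑ s' : S, P x0.1 a s' * (Vb (s', a) - W (s', a)) :=
            Finset.sum_le_sum fun s' _ =>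
              mul_le_mul_of_nonneg_left (hmle (s', a)) ((hP x0.1 a).1 s')
    have h3 : ∑ a : A, π x0 a *
        (γ * ∑ s' : S, P x0.1 a s' * (Vb (s', a) - W (s', a)))
        = (∑ a : A, π x0 a * (r x0.1 a + γ * ∑ s' : S, P x0.1 a s' * Vb (s', a)))
          - ∑ a : A, π x0 a * (r x0.1 a + γ * ∑ s' : S, P x0.1 a s' * W (s', a)) := by
      rw [← Finset.sum_sub_distrib]
      refine Finset.sum_congr rfl fun a _ => ?_
      have : ∑ s' : S, P x0.1 a s' * (Vb (s', a) - W (s', a))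
          = (∑ s' : S, P x0.1 a s' * Vb (s', a)) - ∑ s' : S, P x0.1 a s' * W (s', a) := by
        rw [← Finset.sum_sub_distrib]
        exact Finset.sum_congr rfl fun s' _ => by ring
      rw [this]; ring
    have h4 := hW x0
    have h5 := hVB x0
    calc γ * m = ∑ a : A, π x0 a * (γ * m) := h1
      _ ≤ ∑ a : A, π x0 a *
          (γ * ∑ s' : S, P x0.1 a s' * (Vb (s', a) - W (s', a))) :=
          Finset.sum_le_sum fun a _ => h2 a
      _ = _ - _ := h3
      _ ≤ Vb x0 - W x0 := by rw [← h5]; linarith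
  have hm0 : 0 ≤ m := by nlinarith
  intro s a'
  have := hmle (s, a')
  have hWval : W (s, a') = Vval P r γ πc s := rfl
  linarith


end
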